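/- Let k be a field, F a finite subset of R, and g in V_{F,j} for some j ≥ 0. Then d_F ≤ max(j, d_{F ∪ {g}}). -/

import Mathlib

/-- `VSpace F i` is the smallest `k`-subspace of `k[X_0,...,X_{m-1}]` containing all
`f ∈ F` of total degree at most `i`, and closed under multiplication by arbitrary
polynomials as long as the product has total degree at most `i`. -/
noncomputable def VSpace {k : Type*} [Field k] {m : ℕ} (F : Set (MvPolynomial (Fin m) k)) (i : ℕ) :
    Submodule k (MvPolynomial (Fin m) k) :=
  sInf {W : Submodule k (MvPolynomial (Fin m) k) |
    (∀ f ∈ F, f.totalDegree ≤ i → f ∈ W) ∧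
    ∀ g ∈ W, ∀ h : MvPolynomial (Fin m) k, (h * g).totalDegree ≤ i → h * g ∈ W}

/-- The last fall degree `d_F`: the minimal `d` such that every `f` in the ideal
generated by `F` lies in `VSpace F (max d (deg f))` (`sInf ∅ = 0` by convention). -/
noncomputable def lastFallDegree {k : Type*} [Field k] {m : ℕ}
    (F : Set (MvPolynomial (Fin m) k)) : ℕ :=
  sInf {d : ℕ | ∀ f ∈ Ideal.span F, f ∈ VSpace F (max d f.totalDegree)}

section Aux

variable {k : Type*} [Field k] {m : ℕ} {F F' : Set (MvPolynomial (Fin m) k)} {i i' : ℕ}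

lemma VSpace_le_aux {W : Submodule k (MvPolynomial (Fin m) k)}
    (h1 : ∀ f ∈ F, f.totalDegree ≤ i → f ∈ W)
    (h2 : ∀ g ∈ W, ∀ h : MvPolynomial (Fin m) k, (h * g).totalDegree ≤ i → h * g ∈ W) :
    VSpace F i ≤ W :=
  sInf_le ⟨h1, h2⟩

lemma mem_VSpace_of_mem (f : MvPolynomial (Fin m) k) (hf : f ∈ F) (hd : f.totalDegree ≤ i) :
    f ∈ VSpace F i :=
  Submodule.mem_sInf.2 fun _ hW => hW.1 f hf hd

lemma mul_mem_VSpace (g h : MvPolynomial (Fin m) k) (hg : g ∈ VSpace F i)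
    (hd : (h * g).totalDegree ≤ i) : h * g ∈ VSpace F i :=
  Submodule.mem_sInf.2 fun W hW => hW.2 g (Submodule.mem_sInf.1 hg W hW) h hd

lemma VSpace_mono_degree (hi : i ≤ i') : VSpace F i ≤ VSpace F i' :=
  VSpace_le_aux (fun f hf hd => mem_VSpace_of_mem f hf (hd.trans hi))
    (fun g hg h hd => mul_mem_VSpace g h hg (hd.trans hi))

lemma VSpace_mono_set (hFF : F ⊆ F') : VSpace F i ≤ VSpace F' i :=
  VSpace_le_aux (fun f hf hd => mem_VSpace_of_mem f (hFF hf) hd)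
    (fun g hg h hd => mul_mem_VSpace g h hg hd)

lemma VSpace_le_span : VSpace F i ≤ (Ideal.span F).restrictScalars k :=
  VSpace_le_aux (fun f hf _ => Ideal.subset_span hf)
    (fun g hg h _ => Ideal.mul_mem_left _ h hg)

lemma VSpace_union_singleton {j : ℕ} {g : MvPolynomial (Fin m) k} (hg : g ∈ VSpace F j)
    (hji : j ≤ i) : VSpace (F ∪ {g}) i = VSpace F i := by
  refine le_antisymm ?_ (VSpace_mono_set Set.subset_union_left)
  refine VSpace_le_aux ?_ (fun a ha h hd => mul_mem_VSpace a h ha hd)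
  rintro f (hf | hf) hd
  · exact mem_VSpace_of_mem f hf hd
  · rw [Set.mem_singleton_iff] at hf
    subst hf
    exact VSpace_mono_degree hji hg

lemma span_union_singleton {j : ℕ} {g : MvPolynomial (Fin m) k} (hg : g ∈ VSpace F j) :
    Ideal.span (F ∪ {g}) = Ideal.span F := by
  refine le_antisymm (Ideal.span_le.2 ?_) (Ideal.span_mono Set.subset_union_left)
  rintro f (hf | hf)
  · exact Ideal.subset_span hf
  · rw [Set.mem_singleton_iff] at hf
    subst hf
    exact VSpace_le_span hg

end Aux

/-- If `g ∈ VSpace F j`, then `d_F ≤ max j d_{F ∪ {g}}`. -/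
theorem lastFallDegree_le_max_of_mem_VSpace {k : Type*} [Field k] {m : ℕ}
    (F : Set (MvPolynomial (Fin m) k)) (hF : F.Finite) (j : ℕ)
    (g : MvPolynomial (Fin m) k) (hg : g ∈ VSpace F j) :
    lastFallDegree F ≤ max j (lastFallDegree (F ∪ {g})) := by
  set S' : Set ℕ :=
    {d : ℕ | ∀ f ∈ Ideal.span (F ∪ {g}), f ∈ VSpace (F ∪ {g}) (max d f.totalDegree)} with hS'
  by_cases hne : S'.Nonempty
  · have hmem : lastFallDegree (F ∪ {g}) ∈ S' := Nat.sInf_mem hne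
    apply Nat.sInf_le
    intro f hf
    have hf' : f ∈ Ideal.span (F ∪ {g}) := by rwa [span_union_singleton hg]
    have h1 : f ∈ VSpace (F ∪ {g}) (max (lastFallDegree (F ∪ {g})) f.totalDegree) :=
      hmem f hf'
    have h2 : f ∈ VSpace (F ∪ {g}) (max (max j (lastFallDegree (F ∪ {g}))) f.totalDegree) :=
      VSpace_mono_degree (by omega) h1
    rwa [VSpace_union_singleton hg (by omega)] at h2
  · -- if the set for `F ∪ {g}` is empty, so is the set for `F`
    have hS : ¬ {d : ℕ | ∀ f ∈ Ideal.span F, f ∈ VSpace F (max d f.totalDegree)}.Nonempty := by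
      rintro ⟨d, hd⟩
      apply hne
      refine ⟨max d j, fun f hf => ?_⟩
      have hf' : f ∈ Ideal.span F := by rwa [span_union_singleton hg] at hf
      have h1 : f ∈ VSpace F (max (max d j) f.totalDegree) :=
        VSpace_mono_degree (by omega) (hd f hf')
      rwa [VSpace_union_singleton hg (by omega)]
    rw [Set.not_nonempty_iff_eq_empty] at hS
    unfold lastFallDegree
    rw [hS, Nat.sInf_empty]
    exact Nat.zero_le _
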